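/- There exist ν₊ > 0 and, for each ν ∈ (0, ν₊], a constant l < 0 such that: (i) the sets B_ν⁺ := [√(ν/2), √(2ν)] × [−ν, ν] and B_ν⁻ := [−√(2ν), −√(ν/2)] × [−ν, ν] are forward invariant for the flow of F_ν, and (ii) for every p ∈ B_ν⁺ ∪ B_ν⁻ the symmetric matrix (DF_ν(p) + DF_ν(p)ᵀ)/2 has both eigenvalues at most l, i.e. vᵀ(DF_ν(p) + DF_ν(p)ᵀ)v ≤ 2·l·‖v‖² for all v ∈ ℝ². -/

import Mathlib

open Set Matrix

/-- The planar vector field `F_ν(x, y) = (x(ν − x²) + x³y + xy², −y + x²y + x⁴)`. -/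
noncomputable def F (ν : ℝ) (p : ℝ × ℝ) : ℝ × ℝ :=
  (p.1 * (ν - p.1 ^ 2) + p.1 ^ 3 * p.2 + p.1 * p.2 ^ 2,
   -p.2 + p.1 ^ 2 * p.2 + p.1 ^ 4)

/-- The box `B_θ = [−√(2θ), √(2θ)] × [−θ, θ]`. -/
noncomputable def B (θ : ℝ) : Set (ℝ × ℝ) :=
  Icc (-Real.sqrt (2 * θ)) (Real.sqrt (2 * θ)) ×ˢ Icc (-θ) θ

/-- The Jacobian matrix of `F_ν` at `p`. -/
noncomputable def DF (ν : ℝ) (p : ℝ × ℝ) : Matrix (Fin 2) (Fin 2) ℝ :=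
  !![ν - 3 * p.1 ^ 2 + 3 * p.1 ^ 2 * p.2 + p.2 ^ 2, p.1 ^ 3 + 2 * p.1 * p.2;
     2 * p.1 * p.2 + 4 * p.1 ^ 3, -1 + p.1 ^ 2]

/-- The box `B_ν⁺ = [√(ν/2), √(2ν)] × [−ν, ν]`. -/
noncomputable def Bp (ν : ℝ) : Set (ℝ × ℝ) :=
  Icc (Real.sqrt (ν / 2)) (Real.sqrt (2 * ν)) ×ˢ Icc (-ν) ν

/-- The box `B_ν⁻ = [−√(2ν), −√(ν/2)] × [−ν, ν]`. -/
noncomputable def Bm (ν : ℝ) : Set (ℝ × ℝ) :=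
  Icc (-Real.sqrt (2 * ν)) (-Real.sqrt (ν / 2)) ×ˢ Icc (-ν) ν

lemma stay_below {f : ℝ → ℝ} {t c d : ℝ} (hf : HasDerivAt f d t)
    (hle : f t ≤ c) (hstrict : f t = c → d < 0) :
    ∃ ε > 0, ∀ s ∈ Icc t (t + ε), f s ≤ c := by
  rcases lt_or_eq_of_le hle with hlt | heq
  · have hev : ∀ᶠ s in nhds t, f s < c := hf.continuousAt.eventually_lt continuousAt_const hlt
    rcases Metric.eventually_nhds_iff.mp hev with ⟨δ, hδ, hball⟩
    refine ⟨δ / 2, by linarith, fun s hs => ?_⟩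
    have : dist s t < δ := by
      rw [Real.dist_eq, abs_of_nonneg (by linarith [hs.1])]
      linarith [hs.2]
    exact (hball this).le
  · have hd : d < 0 := hstrict heq
    have hslope : Filter.Tendsto (slope f t) (nhdsWithin t {t}ᶜ) (nhds d) :=
      hasDerivAt_iff_tendsto_slope.mp hf
    have hslope' : Filter.Tendsto (slope f t) (nhdsWithin t (Ioi t)) (nhds d) :=
      hslope.mono_left (nhdsWithin_mono t (fun s hs => ne_of_gt hs))
    have hev : ∀ᶠ s in nhdsWithin t (Ioi t), slope f t s < 0 :=
      hslope' (Iio_mem_nhds hd)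
    rcases (mem_nhdsGT_iff_exists_Ioc_subset).mp hev with ⟨u, hu, hsub⟩
    refine ⟨u - t, by simp [mem_Ioi] at hu; linarith, fun s hs => ?_⟩
    rcases eq_or_lt_of_le hs.1 with h1 | h1
    · rw [← h1]; exact hle
    · have hsl : slope f t s < 0 := hsub ⟨h1, by linarith [hs.2]⟩
      rw [slope_def_field] at hsl
      have h2 : s - t > 0 := by linarith
      rcases div_neg_iff.mp hsl with ⟨h3, h4⟩ | ⟨h3, h4⟩
      · linarith
      · have : f s - f t < 0 := h3
        linarith [heq ▸ this]

lemma forward_inv {K : Set (ℝ × ℝ)} (hK : IsClosed K) {z : ℝ → ℝ × ℝ}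
    (hz : ∀ t ∈ Ici (0:ℝ), ContinuousAt z t)
    (hloc : ∀ t ≥ (0:ℝ), z t ∈ K → ∃ ε > 0, ∀ s ∈ Icc t (t + ε), z s ∈ K)
    (h0 : z 0 ∈ K) : ∀ t ≥ (0:ℝ), z t ∈ K := by
  by_contra hcon
  push_neg at hcon
  obtain ⟨t₀, ht₀, hout⟩ := hcon
  set Bad : Set ℝ := {t | 0 ≤ t ∧ z t ∉ K} with hBad
  have hne : Bad.Nonempty := ⟨t₀, ht₀, hout⟩
  have hbdd : BddBelow Bad := ⟨0, fun b hb => hb.1⟩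
  set T := sInf Bad with hT
  have hT0 : 0 ≤ T := le_csInf hne (fun b hb => hb.1)
  have hgood : ∀ s, 0 ≤ s → s < T → z s ∈ K := by
    intro s hs hsT
    by_contra h
    exact absurd (csInf_le hbdd ⟨hs, h⟩) (not_le.mpr hsT)
  have hTK : z T ∈ K := by
    rcases eq_or_lt_of_le hT0 with h | h
    · rwa [← h]
    · have hcw : ContinuousWithinAt z (Ico 0 T) T := (hz T hT0).continuousWithinAt
      have hmaps : MapsTo z (Ico 0 T) K := fun s hs => hgood s hs.1 hs.2
      have hmem : T ∈ closure (Ico (0:ℝ) T) := by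
        rw [closure_Ico (by linarith : (0:ℝ) ≠ T)]
        exact ⟨hT0, le_refl T⟩
      have := hcw.mem_closure_image hmem
      exact hK.closure_subset_iff.mpr (subset_refl K)
        (closure_mono (image_subset_iff.mpr hmaps) this)
  obtain ⟨ε, hε, hstay⟩ := hloc T hT0 hTK
  obtain ⟨b, hbB, hbε⟩ := (csInf_lt_iff hbdd hne).mp (show T < T + ε by linarith)
  have hTb : T ≤ b := csInf_le hbdd hbB
  exact hbB.2 (hstay b ⟨hTb, hbε.le⟩)

lemma bp_inv {ν : ℝ} (hν0 : 0 < ν) (hν1 : ν ≤ 1/6400) (z : ℝ → ℝ × ℝ)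
    (hz : ∀ t ∈ Ici (0:ℝ), HasDerivAt z (F ν (z t)) t) (h0 : z 0 ∈ Bp ν) :
    ∀ t ≥ (0:ℝ), z t ∈ Bp ν := by
  apply forward_inv (isClosed_Icc.prod isClosed_Icc)
    (fun t ht => (hz t ht).continuousAt) _ h0
  intro t ht hmem
  obtain ⟨⟨hx1, hx2⟩, hy1, hy2⟩ := hmem
  set x := (z t).1 with hxdef
  set y := (z t).2 with hydef
  have hd := hz t ht
  have hdx : HasDerivAt (fun s => (z s).1) (F ν (z t)).1 t := hd.fst
  have hdy : HasDerivAt (fun s => (z s).2) (F ν (z t)).2 t := hd.snd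
  have hFx : (F ν (z t)).1 = x * (ν - x ^ 2) + x ^ 3 * y + x * y ^ 2 := rfl
  have hFy : (F ν (z t)).2 = -y + x ^ 2 * y + x ^ 4 := rfl
  have hs20 : (0:ℝ) ≤ 2 * ν := by linarith
  have hs120 : (0:ℝ) ≤ ν / 2 := by linarith
  have hx0 : 0 < x := lt_of_lt_of_le (Real.sqrt_pos.mpr (by linarith)) hx1
  have hxsq_le : x ^ 2 ≤ 2 * ν := by
    have := pow_le_pow_left₀ hx0.le hx2 2
    rwa [Real.sq_sqrt hs20] at this
  have hxsq_ge : ν / 2 ≤ x ^ 2 := by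
    have := pow_le_pow_left₀ (Real.sqrt_nonneg _) hx1 2
    rwa [Real.sq_sqrt hs120] at this
  have S1 : x = Real.sqrt (2 * ν) → (F ν (z t)).1 < 0 := by
    intro h
    have hx2' : x ^ 2 = 2 * ν := by rw [h]; exact Real.sq_sqrt hs20
    have hfac : 0 < ν - 2 * ν * y - y ^ 2 := by
      nlinarith [mul_pos hν0 (show (0:ℝ) < 1 - 3 * ν by linarith)]
    have : (F ν (z t)).1 = -(x * (ν - 2 * ν * y - y ^ 2)) := by
      rw [hFx]; linear_combination ((y - 1) * x) * hx2'
    rw [this]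
    exact neg_lt_zero.mpr (mul_pos hx0 hfac)
  have S2 : -x = -Real.sqrt (ν / 2) → -(F ν (z t)).1 < 0 := by
    intro h
    have h' : x = Real.sqrt (ν / 2) := by linarith
    have hx2' : x ^ 2 = ν / 2 := by rw [h']; exact Real.sq_sqrt hs120
    have hfac : 0 < ν / 2 + ν / 2 * y + y ^ 2 := by
      nlinarith [sq_nonneg y, mul_nonneg hν0.le (show (0:ℝ) ≤ y + ν by linarith),
        mul_pos hν0 (show (0:ℝ) < 1 - ν by linarith)]
    have : (F ν (z t)).1 = x * (ν / 2 + ν / 2 * y + y ^ 2) := by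
      rw [hFx]; linear_combination ((y - 1) * x) * hx2'
    rw [this]
    exact neg_lt_zero.mpr (mul_pos hx0 hfac)
  have S3 : y = ν → (F ν (z t)).2 < 0 := by
    intro h
    rw [hFy, h]
    nlinarith [mul_nonneg (show (0:ℝ) ≤ 2 * ν - x ^ 2 by linarith) (sq_nonneg x),
      mul_nonneg hν0.le (show (0:ℝ) ≤ 2 * ν - x ^ 2 by linarith),
      mul_pos hν0 (show (0:ℝ) < 1 - 6 * ν by linarith)]
  have S4 : -y = ν → -(F ν (z t)).2 < 0 := by
    intro h
    have h' : y = -ν := by linarith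
    rw [hFy, h']
    nlinarith [mul_nonneg hν0.le (show (0:ℝ) ≤ 2 * ν - x ^ 2 by linarith),
      pow_pos hx0 4, mul_pos hν0 (show (0:ℝ) < 1 - 2 * ν by linarith)]
  obtain ⟨ε₁, hε₁, h₁⟩ := stay_below hdx hx2 S1
  obtain ⟨ε₂, hε₂, h₂⟩ := stay_below hdx.neg (neg_le_neg hx1) S2
  obtain ⟨ε₃, hε₃, h₃⟩ := stay_below hdy hy2 S3
  obtain ⟨ε₄, hε₄, h₄⟩ := stay_below hdy.neg (by linarith : -(z t).2 ≤ ν) S4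
  refine ⟨min (min ε₁ ε₂) (min ε₃ ε₄), by positivity, fun s hs => ?_⟩
  have m1 : min (min ε₁ ε₂) (min ε₃ ε₄) ≤ ε₁ := le_trans (min_le_left _ _) (min_le_left _ _)
  have m2 : min (min ε₁ ε₂) (min ε₃ ε₄) ≤ ε₂ := le_trans (min_le_left _ _) (min_le_right _ _)
  have m3 : min (min ε₁ ε₂) (min ε₃ ε₄) ≤ ε₃ := le_trans (min_le_right _ _) (min_le_left _ _)
  have m4 : min (min ε₁ ε₂) (min ε₃ ε₄) ≤ ε₄ := le_trans (min_le_right _ _) (min_le_right _ _)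
  have k1 := h₁ s ⟨hs.1, by linarith [hs.2]⟩
  have k2 := h₂ s ⟨hs.1, by linarith [hs.2]⟩
  have k3 := h₃ s ⟨hs.1, by linarith [hs.2]⟩
  have k4 := h₄ s ⟨hs.1, by linarith [hs.2]⟩
  exact ⟨⟨by linarith [show -(z s).1 ≤ -Real.sqrt (ν / 2) from k2], k1⟩, by linarith [show -(z s).2 ≤ ν from k4], k3⟩

lemma bm_inv {ν : ℝ} (hν0 : 0 < ν) (hν1 : ν ≤ 1/6400) (z : ℝ → ℝ × ℝ)
    (hz : ∀ t ∈ Ici (0:ℝ), HasDerivAt z (F ν (z t)) t) (h0 : z 0 ∈ Bm ν) :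
    ∀ t ≥ (0:ℝ), z t ∈ Bm ν := by
  set w : ℝ → ℝ × ℝ := fun s => (-(z s).1, (z s).2) with hw
  have hwd : ∀ t ∈ Ici (0:ℝ), HasDerivAt w (F ν (w t)) t := by
    intro t ht
    have hd := hz t ht
    have hfst : HasDerivAt (fun s => (z s).1) ((F ν (z t)).1) t := hd.fst
    have hsnd : HasDerivAt (fun s => (z s).2) ((F ν (z t)).2) t := hd.snd
    have : HasDerivAt w (-(F ν (z t)).1, (F ν (z t)).2) t := HasDerivAt.prodMk hfst.neg hsnd
    convert this using 1
    show F ν (-(z t).1, (z t).2) = _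
    simp only [F, Prod.mk.injEq]
    constructor <;> ring
  have hw0 : w 0 ∈ Bp ν := by
    obtain ⟨⟨a1, a2⟩, b1, b2⟩ := h0
    exact ⟨⟨by simpa using neg_le_neg a2, by simpa using neg_le_neg a1⟩, b1, b2⟩
  intro t ht
  obtain ⟨⟨a1, a2⟩, b1, b2⟩ := bp_inv hν0 hν1 w hwd hw0 t ht
  exact ⟨⟨by linarith [show (w t).1 = -(z t).1 from rfl], by linarith [show (w t).1 = -(z t).1 from rfl]⟩, b1, b2⟩

set_option maxHeartbeats 1000000 in
lemma quad_bound {ν : ℝ} (hν0 : 0 < ν) (hν1 : ν ≤ 1/6400) (p : ℝ × ℝ)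
    (hxl : -Real.sqrt (2*ν) ≤ p.1) (hxu : p.1 ≤ Real.sqrt (2*ν))
    (hx2l : ν/2 ≤ p.1^2) (hx2u : p.1^2 ≤ 2*ν)
    (hyl : -ν ≤ p.2) (hyu : p.2 ≤ ν) (v : Fin 2 → ℝ) :
    v ⬝ᵥ ((DF ν p + (DF ν p)ᵀ) *ᵥ v) ≤ 2 * (-(ν/8)) * (v 0 ^ 2 + v 1 ^ 2) := by
  set x := p.1
  set y := p.2
  set s := Real.sqrt (2*ν) with hsdef
  have hs0 : 0 ≤ s := Real.sqrt_nonneg _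
  have hs2 : s ^ 2 = 2*ν := Real.sq_sqrt (by linarith)
  have hs56 : s ≤ 1/56 := by nlinarith [sq_nonneg (s - 1/56)]
  have hc1 : 5*x^3 + 4*x*y ≤ ν/4 := by
    nlinarith [mul_nonneg (sub_nonneg.2 hxu) (sq_nonneg x),
      mul_nonneg hs0 (sub_nonneg.2 hx2u),
      mul_nonneg (sub_nonneg.2 hxu) (sub_nonneg.2 hyl),
      mul_nonneg (sub_nonneg.2 (neg_le.mp hxl)) (sub_nonneg.2 hyu),
      mul_nonneg hν0.le (sub_nonneg.2 hs56)]
  have hc2 : -(ν/4) ≤ 5*x^3 + 4*x*y := by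
    nlinarith [mul_nonneg (sub_nonneg.2 (neg_le.mp hxl)) (sq_nonneg x),
      mul_nonneg hs0 (sub_nonneg.2 hx2u),
      mul_nonneg (sub_nonneg.2 hxu) (sub_nonneg.2 hyu),
      mul_nonneg (sub_nonneg.2 (neg_le.mp hxl)) (sub_nonneg.2 hyl),
      mul_nonneg hν0.le (sub_nonneg.2 hs56)]
  have ha : ν - 3*x^2 + 3*x^2*y + y^2 ≤ -(ν/4) := by
    nlinarith [mul_nonneg (sq_nonneg x) (sub_nonneg.2 hyu),
      mul_nonneg hν0.le (sub_nonneg.2 hx2u),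
      mul_nonneg hν0.le (show (0:ℝ) ≤ 1/28 - ν by linarith)]
  have hd : -1 + x^2 ≤ -(ν/4) := by nlinarith
  have hquad : v ⬝ᵥ ((DF ν p + (DF ν p)ᵀ) *ᵥ v) =
      2*(ν - 3*x^2 + 3*x^2*y + y^2)*(v 0)^2
      + 2*(5*x^3 + 4*x*y)*(v 0)*(v 1) + 2*(-1 + x^2)*(v 1)^2 := by
    simp [DF, Matrix.mulVec, dotProduct, Fin.sum_univ_two, Matrix.transpose_apply,
      Matrix.add_apply, Matrix.cons_val_zero, Matrix.cons_val_one, Matrix.head_cons,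
      Matrix.vecHead, Matrix.vecTail, Matrix.transpose]
    ring
  rw [hquad]
  have H1 : 0 ≤ (-(ν/4) - (ν - 3*x^2 + 3*x^2*y + y^2)) * (v 0)^2 :=
    mul_nonneg (by linarith) (sq_nonneg _)
  have H2 : 0 ≤ (-(ν/4) - (-1 + x^2)) * (v 1)^2 := mul_nonneg (by linarith) (sq_nonneg _)
  have H3 : 0 ≤ (ν/4 - (5*x^3 + 4*x*y)) * (v 0 + v 1)^2 := mul_nonneg (by linarith) (sq_nonneg _)
  have H4 : 0 ≤ (ν/4 + (5*x^3 + 4*x*y)) * (v 0 - v 1)^2 := mul_nonneg (by linarith) (sq_nonneg _)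
  nlinarith [H1, H2, H3, H4]

/-- There exist `ν₊ > 0` and, for each `ν ∈ (0, ν₊]`, a constant `l < 0` such that
`B_ν⁺` and `B_ν⁻` are forward invariant for the flow of `F_ν`, and on their union
the symmetrized Jacobian satisfies `vᵀ(DF_ν(p) + DF_ν(p)ᵀ)v ≤ 2·l·‖v‖²`. -/
theorem stmt7 :
    ∃ νp : ℝ, 0 < νp ∧ ∀ ν ∈ Ioc (0 : ℝ) νp, ∃ l : ℝ, l < 0 ∧
      (∀ z : ℝ → ℝ × ℝ,
        (∀ t ∈ Ici (0 : ℝ), HasDerivAt z (F ν (z t)) t) →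
        z 0 ∈ Bp ν → ∀ t ≥ (0 : ℝ), z t ∈ Bp ν) ∧
      (∀ z : ℝ → ℝ × ℝ,
        (∀ t ∈ Ici (0 : ℝ), HasDerivAt z (F ν (z t)) t) →
        z 0 ∈ Bm ν → ∀ t ≥ (0 : ℝ), z t ∈ Bm ν) ∧
      (∀ p ∈ Bp ν ∪ Bm ν, ∀ v : Fin 2 → ℝ,
        v ⬝ᵥ ((DF ν p + (DF ν p)ᵀ) *ᵥ v) ≤ 2 * l * (v 0 ^ 2 + v 1 ^ 2)) := by
  refine ⟨1/6400, by norm_num, fun ν hν => ?_⟩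
  obtain ⟨hν0, hν1⟩ := hν
  refine ⟨-(ν/8), by linarith, fun z hz h0 => bp_inv hν0 hν1 z hz h0,
    fun z hz h0 => bm_inv hν0 hν1 z hz h0, ?_⟩
  intro p hp v
  have hs0 : 0 ≤ Real.sqrt (2*ν) := Real.sqrt_nonneg _
  rcases hp with hp | hp
  · obtain ⟨⟨hx1, hx2⟩, hy1, hy2⟩ := hp
    have hx0 : 0 ≤ p.1 := le_trans (Real.sqrt_nonneg _) hx1
    have hx2u : p.1^2 ≤ 2*ν := by
      have := pow_le_pow_left₀ hx0 hx2 2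
      rwa [Real.sq_sqrt (by linarith)] at this
    have hx2l : ν/2 ≤ p.1^2 := by
      have := pow_le_pow_left₀ (Real.sqrt_nonneg _) hx1 2
      rwa [Real.sq_sqrt (by linarith)] at this
    exact quad_bound hν0 hν1 p (by linarith) hx2 hx2l hx2u hy1 hy2 v
  · obtain ⟨⟨hx1, hx2⟩, hy1, hy2⟩ := hp
    have hxng : p.1 ≤ 0 := le_trans hx2 (by simpa using Real.sqrt_nonneg (ν/2))
    have h1 : Real.sqrt (ν/2) ≤ -p.1 := by linarith
    have h2 : -p.1 ≤ Real.sqrt (2*ν) := by linarith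
    have hsq : (-p.1)^2 = p.1^2 := by ring
    have hx2u : p.1^2 ≤ 2*ν := by
      have := pow_le_pow_left₀ (by linarith : (0:ℝ) ≤ -p.1) h2 2
      rw [Real.sq_sqrt (by linarith), hsq] at this
      exact this
    have hx2l : ν/2 ≤ p.1^2 := by
      have := pow_le_pow_left₀ (Real.sqrt_nonneg _) h1 2
      rw [Real.sq_sqrt (by linarith), hsq] at this
      exact this
    exact quad_bound hν0 hν1 p hx1 (by linarith) hx2l hx2u hy1 hy2 v
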